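/- Let m ≥ 1 and n ≥ 3, and let N = mn. Let π be the partition of N with m+n−1 parts equal to 1 and m−1 parts equal to n−1, and let σ be the ordered tuple (n, n−1, …, n−1, 1, …, 1) consisting of one part n, followed by m−1 parts n−1, followed by m−1 parts 1. Then the number of breakings of π according to σ is exactly m: either the part n breaks as 1+1+⋯+1 and all other parts break trivially, or the part n breaks as {n−1, 1}, exactly one of the m−1 parts equal to n−1 breaks as 1+1+⋯+1, and the remaining parts break trivially. -/

import Mathlib

/-- `b` is a breaking of the partition `π` (a multiset of positive integers)
according to the ordered tuple `σ`: each `b i` is a partition of `σ i`, and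
the multiset union of all the parts of the `b i` equals `π`. -/
def IsBreaking {l : ℕ} (σ : Fin l → ℕ) (π : Multiset ℕ) (b : Fin l → Multiset ℕ) : Prop :=
  (∀ i, (∀ x ∈ b i, 0 < x) ∧ (b i).sum = σ i) ∧ (∑ i, b i) = π

/-- The tuple σ = (n, (n−1)^{m−1}, 1^{m−1}). -/
def sigma15 (m n : ℕ) : Fin (2 * m - 1) → ℕ := fun i =>
  if (i : ℕ) = 0 then n else if (i : ℕ) ≤ m - 1 then n - 1 else 1

/-- The partition π = (1^{m+n−1} (n−1)^{m−1}). -/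
def pi15 (m n : ℕ) : Multiset ℕ :=
  Multiset.replicate (m + n - 1) 1 + Multiset.replicate (m - 1) (n - 1)

/-- The breaking where n breaks as 1 + ⋯ + 1 and all other parts break
trivially. -/
def bA15 (m n : ℕ) : Fin (2 * m - 1) → Multiset ℕ := fun i =>
  if (i : ℕ) = 0 then Multiset.replicate n 1
  else if (i : ℕ) ≤ m - 1 then {n - 1} else {1}

/-- The breaking where n breaks as {n−1, 1}, the part n−1 in position j breaks
as 1 + ⋯ + 1, and all other parts break trivially. -/
def bB15 (m n : ℕ) (j : Fin (2 * m - 1)) : Fin (2 * m - 1) → Multiset ℕ := fun i =>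
  if (i : ℕ) = 0 then {n - 1, 1}
  else if i = j then Multiset.replicate (n - 1) 1
  else if (i : ℕ) ≤ m - 1 then {n - 1} else {1}

section helpers

lemma sum_split {M : Type*} [AddCommMonoid M] (m : ℕ) (hm : 1 ≤ m) (f : ℕ → M) (X Y Z : M)
    (h0 : f 0 = X) (hY : ∀ j, 1 ≤ j → j ≤ m - 1 → f j = Y) (hZ : ∀ j, m ≤ j → f j = Z) :
    ∑ i : Fin (2 * m - 1), f (i : ℕ) = X + (m - 1) • Y + (m - 1) • Z := by
  rw [Fin.sum_univ_eq_sum_range f (2 * m - 1), Finset.range_eq_Ico,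
    ← Finset.sum_Ico_consecutive f (Nat.zero_le m) (by omega : m ≤ 2 * m - 1),
    ← Finset.sum_Ico_consecutive f (Nat.zero_le 1) (by omega : 1 ≤ m)]
  have h1 : ∑ i ∈ Finset.Ico 0 1, f i = X := by simp [h0]
  have h2 : ∑ i ∈ Finset.Ico 1 m, f i = (m - 1) • Y := by
    rw [Finset.sum_congr rfl (fun j hj => hY j (Finset.mem_Ico.1 hj).1 (by
      have := (Finset.mem_Ico.1 hj).2; omega)), Finset.sum_const, Nat.card_Ico]
  have h3 : ∑ i ∈ Finset.Ico m (2 * m - 1), f i = (m - 1) • Z := by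
    rw [Finset.sum_congr rfl (fun j hj => hZ j (Finset.mem_Ico.1 hj).1), Finset.sum_const,
      Nat.card_Ico, show 2 * m - 1 - m = m - 1 by omega]
  rw [h1, h2, h3]

lemma shape (n : ℕ) (hn : 3 ≤ n) (s : Multiset ℕ)
    (h : ∀ x ∈ s, x = 1 ∨ x = n - 1) :
    s = Multiset.replicate (s.count 1) 1 + Multiset.replicate (s.count (n - 1)) (n - 1) := by
  ext x
  rw [Multiset.count_add, Multiset.count_replicate, Multiset.count_replicate]
  by_cases h1 : x = 1
  · subst h1; simp [show ¬ (n - 1 = 1) by omega]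
  · by_cases h2 : x = n - 1
    · subst h2; simp [show ¬ (1 = n - 1) by omega]
    · rw [if_neg (by omega), if_neg (fun hh => h2 hh.symm),
        Multiset.count_eq_zero.2 (fun hx => by rcases h x hx with h' | h' <;> omega)]

lemma shape_sum (n : ℕ) (hn : 3 ≤ n) (s : Multiset ℕ)
    (h : ∀ x ∈ s, x = 1 ∨ x = n - 1) :
    s.sum = s.count 1 + s.count (n - 1) * (n - 1) := by
  conv_lhs => rw [shape n hn s h]
  rw [Multiset.sum_add, Multiset.sum_replicate, Multiset.sum_replicate, smul_eq_mul,
    smul_eq_mul, mul_one]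

lemma piA (m n : ℕ) (hm : 1 ≤ m) (hn : 3 ≤ n) :
    Multiset.replicate n 1 + (m - 1) • ({n - 1} : Multiset ℕ) + (m - 1) • ({1} : Multiset ℕ)
      = pi15 m n := by
  ext x
  simp only [pi15, Multiset.count_add, Multiset.count_replicate, Multiset.count_nsmul,
    Multiset.count_singleton]
  split_ifs <;> omega

lemma piB (m n : ℕ) (hm : 2 ≤ m) (hn : 3 ≤ n) :
    Multiset.replicate (n - 1) 1 + (({n - 1, 1} : Multiset ℕ) + (m - 1) • ({n - 1} : Multiset ℕ)
      + (m - 1) • ({1} : Multiset ℕ)) = pi15 m n + {n - 1} := by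
  ext x
  simp only [pi15, Multiset.count_add, Multiset.count_replicate, Multiset.count_nsmul,
    Multiset.count_singleton, Multiset.insert_eq_cons, Multiset.count_cons]
  split_ifs <;> omega

lemma pair_eq (n : ℕ) (hn : 3 ≤ n) :
    Multiset.replicate 1 1 + Multiset.replicate 1 (n - 1) = ({n - 1, 1} : Multiset ℕ) := by
  ext x
  simp only [Multiset.count_add, Multiset.count_replicate, Multiset.insert_eq_cons,
    Multiset.count_cons, Multiset.count_singleton]
  split_ifs <;> omega

lemma filter_card (m : ℕ) (hm : 1 ≤ m) :
    (Finset.univ.filter (fun j : Fin (2 * m - 1) => 1 ≤ (j : ℕ) ∧ (j : ℕ) ≤ m - 1)).card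
      = m - 1 := by
  rw [Finset.card_filter]
  rw [Fin.sum_univ_eq_sum_range (fun j => if 1 ≤ j ∧ j ≤ m - 1 then 1 else 0) (2 * m - 1)]
  rw [← Finset.card_filter]
  have : (Finset.range (2 * m - 1)).filter (fun j => 1 ≤ j ∧ j ≤ m - 1) = Finset.Ico 1 m := by
    ext j; simp [Finset.mem_filter, Finset.mem_range, Finset.mem_Ico]; omega
  rw [this, Nat.card_Ico]

lemma filterS_card (m : ℕ) (hm : 1 ≤ m) :
    (Finset.univ.filter (fun j : Fin (2 * m - 1) => (j : ℕ) ≤ m - 1)).card = m := by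
  rw [Finset.card_filter]
  rw [Fin.sum_univ_eq_sum_range (fun j => if j ≤ m - 1 then 1 else 0) (2 * m - 1)]
  rw [← Finset.card_filter]
  have : (Finset.range (2 * m - 1)).filter (fun j => j ≤ m - 1) = Finset.range m := by
    ext j; simp [Finset.mem_filter, Finset.mem_range]; omega
  rw [this, Finset.card_range]

lemma bA_breaking (m n : ℕ) (hm : 1 ≤ m) (hn : 3 ≤ n) :
    IsBreaking (sigma15 m n) (pi15 m n) (bA15 m n) := by
  constructor
  · intro i
    by_cases h0 : (i : ℕ) = 0
    · simp only [bA15, sigma15, if_pos h0]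
      exact ⟨fun x hx => by rw [Multiset.eq_of_mem_replicate hx]; omega,
        by rw [Multiset.sum_replicate, smul_eq_mul, mul_one]⟩
    · by_cases hmid : (i : ℕ) ≤ m - 1
      · simp only [bA15, sigma15, if_neg h0, if_pos hmid]
        exact ⟨fun x hx => by rw [Multiset.mem_singleton.1 hx]; omega, by simp⟩
      · simp only [bA15, sigma15, if_neg h0, if_neg hmid]
        exact ⟨fun x hx => by rw [Multiset.mem_singleton.1 hx]; omega, by simp⟩
  · have hs := sum_split m hm
      (fun j => if j = 0 then Multiset.replicate n 1
        else if j ≤ m - 1 then ({n - 1} : Multiset ℕ) else {1})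
      (Multiset.replicate n 1) ({n - 1} : Multiset ℕ) ({1} : Multiset ℕ)
      (by simp)
      (fun j hj1 hj2 => by rw [if_neg (by omega), if_pos hj2])
      (fun j hj => by rw [if_neg (by omega), if_neg (by omega)])
    exact hs.trans (piA m n hm hn)

lemma bB_breaking (m n : ℕ) (hm : 1 ≤ m) (hn : 3 ≤ n) (j : Fin (2 * m - 1))
    (hj1 : 1 ≤ (j : ℕ)) (hj2 : (j : ℕ) ≤ m - 1) :
    IsBreaking (sigma15 m n) (pi15 m n) (bB15 m n j) := by
  have hm2 : 2 ≤ m := by omega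
  constructor
  · intro i
    by_cases h0 : (i : ℕ) = 0
    · have hij : i ≠ j := fun h => by rw [h] at h0; omega
      simp only [bB15, sigma15, if_pos h0]
      refine ⟨fun x hx => ?_, ?_⟩
      · rcases Multiset.mem_cons.1 hx with h | h
        · omega
        · rw [Multiset.mem_singleton.1 h]; omega
      · simp [Multiset.insert_eq_cons]; omega
    · by_cases hij : i = j
      · subst hij
        have e1 : bB15 m n i i = Multiset.replicate (n - 1) 1 := by
          simp [bB15, h0]
        have e2 : sigma15 m n i = n - 1 := by
          simp only [sigma15, if_neg h0, if_pos hj2]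
        rw [e1, e2]
        exact ⟨fun x hx => by rw [Multiset.eq_of_mem_replicate hx]; omega,
          by rw [Multiset.sum_replicate, smul_eq_mul, mul_one]⟩
      · by_cases hmid : (i : ℕ) ≤ m - 1
        · simp only [bB15, sigma15, if_neg h0, if_neg hij, if_pos hmid]
          exact ⟨fun x hx => by rw [Multiset.mem_singleton.1 hx]; omega, by simp⟩
        · simp only [bB15, sigma15, if_neg h0, if_neg hij, if_neg hmid]
          exact ⟨fun x hx => by rw [Multiset.mem_singleton.1 hx]; omega, by simp⟩
  · set g : ℕ → Multiset ℕ := fun i =>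
      if i = 0 then ({n - 1, 1} : Multiset ℕ) else if i ≤ m - 1 then {n - 1} else {1} with hg
    have hgval : ∀ i : ℕ, g i = if i = 0 then ({n - 1, 1} : Multiset ℕ)
        else if i ≤ m - 1 then {n - 1} else {1} := fun i => rfl
    have hupd : bB15 m n j = Function.update (fun i : Fin (2 * m - 1) => g (i : ℕ)) j
        (Multiset.replicate (n - 1) 1) := by
      funext i
      by_cases hij : i = j
      · rw [hij, Function.update_self]
        simp [bB15, show ¬((j : ℕ) = 0) by omega]
      · rw [Function.update_of_ne hij]
        by_cases h0 : (i : ℕ) = 0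
        · simp only [bB15, if_pos h0, hgval]
        · simp only [bB15, if_neg h0, if_neg hij, hgval]
    have hsum : (∑ i : Fin (2 * m - 1), g (i : ℕ))
        = ({n - 1, 1} : Multiset ℕ) + (m - 1) • ({n - 1} : Multiset ℕ)
          + (m - 1) • ({1} : Multiset ℕ) :=
      sum_split m hm g _ _ _ (by rw [hgval]; simp)
        (fun k hk1 hk2 => by rw [hgval, if_neg (by omega), if_pos hk2])
        (fun k hk => by rw [hgval, if_neg (by omega), if_neg (by omega)])
    have hsplit : (∑ i : Fin (2 * m - 1), g (i : ℕ))
        = (∑ i ∈ Finset.univ \ {j}, g (i : ℕ)) + {n - 1} := by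
      have hgj : g (j : ℕ) = {n - 1} := by
        rw [hgval, if_neg (by omega), if_pos hj2]
      rw [← hgj]
      exact Finset.sum_eq_sum_sdiff_singleton_add (Finset.mem_univ j)
        (fun i : Fin (2 * m - 1) => g (i : ℕ))
    have key : (∑ i, bB15 m n j i) + ({n - 1} : Multiset ℕ) = pi15 m n + {n - 1} := by
      rw [hupd, Finset.sum_update_of_mem (Finset.mem_univ j), add_assoc, ← hsplit, hsum,
        piB m n hm2 hn]
    exact add_right_cancel key

lemma breaking_classify (m n : ℕ) (hm : 1 ≤ m) (hn : 3 ≤ n)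
    (b : Fin (2 * m - 1) → Multiset ℕ) (hb : IsBreaking (sigma15 m n) (pi15 m n) b) :
    b = bA15 m n ∨ ∃ j : Fin (2 * m - 1), 1 ≤ (j : ℕ) ∧ (j : ℕ) ≤ m - 1 ∧ b = bB15 m n j := by
  obtain ⟨h1, h2⟩ := hb
  have hmem : ∀ i, ∀ x ∈ b i, x = 1 ∨ x = n - 1 := by
    intro i x hx
    have hle : b i ≤ ∑ k, b k :=
      Finset.single_le_sum (f := b) (fun k _ => Multiset.zero_le _) (Finset.mem_univ i)
    have hx' : x ∈ pi15 m n := h2 ▸ Multiset.mem_of_le hle hx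
    simp only [pi15, Multiset.mem_add, Multiset.mem_replicate] at hx'
    tauto
  set c : Fin (2 * m - 1) → ℕ := fun i => (b i).count (n - 1) with hc
  set a : Fin (2 * m - 1) → ℕ := fun i => (b i).count 1 with ha
  have hbi : ∀ i, b i = Multiset.replicate (a i) 1 + Multiset.replicate (c i) (n - 1) :=
    fun i => shape n hn _ (hmem i)
  have hsum : ∀ i, a i + c i * (n - 1) = sigma15 m n i := fun i => by
    rw [← shape_sum n hn _ (hmem i)]; exact (h1 i).2
  have hsig : ∀ i : Fin (2 * m - 1), sigma15 m n i ≤ n := fun i => by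
    rw [sigma15]; split_ifs <;> omega
  have hcle1 : ∀ i, c i ≤ 1 := by
    intro i
    by_contra hgt
    push_neg at hgt
    have h1' := hsum i
    have h2' : 2 * (n - 1) ≤ c i * (n - 1) := Nat.mul_le_mul_right _ (by omega)
    have h3' := hsig i
    generalize c i * (n - 1) = K at h1' h2'
    omega
  have htail : ∀ i : Fin (2 * m - 1), m - 1 < (i : ℕ) → b i = {1} ∧ c i = 0 := by
    intro i hi
    have hs := hsum i
    have hsig1 : sigma15 m n i = 1 := by
      rw [sigma15, if_neg (by omega), if_neg (by omega)]
    rw [hsig1] at hs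
    have hc0 : c i = 0 := by
      by_contra hne
      have : 1 * (n - 1) ≤ c i * (n - 1) := Nat.mul_le_mul_right _ (by omega)
      generalize c i * (n - 1) = K at hs this
      omega
    have ha1 : a i = 1 := by rw [hc0] at hs; omega
    refine ⟨?_, hc0⟩
    rw [hbi i, hc0, ha1]
    simp
  have hcount : ∑ i, c i = m - 1 := by
    have hcc := congrArg (Multiset.count (n - 1)) h2
    rw [Multiset.count_sum'] at hcc
    simpa [pi15, Multiset.count_replicate, show ¬((1 : ℕ) = n - 1) by omega] using hcc
  -- the filter set
  set S : Finset (Fin (2 * m - 1)) := Finset.univ.filter (fun i => (i : ℕ) ≤ m - 1) with hS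
  have hSsum : ∑ i ∈ S, c i = m - 1 := by
    have hzero : ∑ i ∈ Finset.univ.filter
        (fun i : Fin (2 * m - 1) => ¬((i : ℕ) ≤ m - 1)), c i = 0 :=
      Finset.sum_eq_zero (fun i hi =>
        (htail i (by have := (Finset.mem_filter.1 hi).2; omega)).2)
    have hsplit := Finset.sum_filter_add_sum_filter_not Finset.univ
      (fun i : Fin (2 * m - 1) => (i : ℕ) ≤ m - 1) c
    rw [hzero, ← hS] at hsplit
    omega
  
  have hScard : S.card = m := by rw [hS]; exact filterS_card m hm
  set A : Finset (Fin (2 * m - 1)) := S.filter (fun i => c i = 0) with hA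
  have hBsum : ∑ i ∈ S, c i = (S.filter (fun i => ¬ c i = 0)).card := by
    rw [Finset.card_filter]
    exact Finset.sum_congr rfl (fun i _ => by have := hcle1 i; split_ifs with h <;> omega)
  have hcardA : A.card = 1 := by
    have hfc := Finset.card_filter_add_card_filter_not (s := S) (fun i => c i = 0)
    rw [← hA] at hfc
    omega
  obtain ⟨j, hj⟩ := Finset.card_eq_one.1 hcardA
  have hjmem : j ∈ A := hj ▸ Finset.mem_singleton_self j
  have hjS : (j : ℕ) ≤ m - 1 := (Finset.mem_filter.1 ((Finset.mem_filter.1 hjmem).1)).2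
  have hcj : c j = 0 := (Finset.mem_filter.1 hjmem).2
  have huniq : ∀ i : Fin (2 * m - 1), (i : ℕ) ≤ m - 1 → c i = 0 → i = j := by
    intro i hi hci
    have : i ∈ A := Finset.mem_filter.2 ⟨Finset.mem_filter.2 ⟨Finset.mem_univ _, hi⟩, hci⟩
    rw [hj] at this
    exact Finset.mem_singleton.1 this
  have hcmid1 : ∀ i : Fin (2 * m - 1), (i : ℕ) ≤ m - 1 → i ≠ j → c i = 1 := by
    intro i hi hij
    have := hcle1 i
    rcases Nat.lt_or_ge (c i) 1 with h | h
    · exact absurd (huniq i hi (by omega)) hij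
    · omega
  by_cases hj0 : (j : ℕ) = 0
  · left
    funext i
    by_cases h0 : (i : ℕ) = 0
    · have hij : i = j := Fin.ext (by omega)
      have hci : c i = 0 := by rw [hij]; exact hcj
      have hsσ := hsum i
      simp only [sigma15, if_pos h0] at hsσ
      have hai : a i = n := by rw [hci] at hsσ; omega
      rw [hbi i, hai, hci]
      simp [bA15, h0]
    · by_cases hmid : (i : ℕ) ≤ m - 1
      · have hij : i ≠ j := fun h => h0 (by rw [h]; exact hj0)
        have hci : c i = 1 := hcmid1 i hmid hij
        have hsσ := hsum i
        simp only [sigma15, if_neg h0, if_pos hmid] at hsσ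
        have hai : a i = 0 := by rw [hci] at hsσ; omega
        rw [hbi i, hai, hci]
        simp [bA15, h0, hmid]
      · rw [(htail i (by omega)).1]
        simp [bA15, h0, hmid]
  · right
    refine ⟨j, by omega, hjS, ?_⟩
    funext i
    by_cases h0 : (i : ℕ) = 0
    · have hij : i ≠ j := fun h => hj0 (by rw [← h]; exact h0)
      have hci : c i = 1 := hcmid1 i (by omega) hij
      have hsσ := hsum i
      simp only [sigma15, if_pos h0] at hsσ
      have hai : a i = 1 := by rw [hci] at hsσ; omega
      rw [hbi i, hai, hci, pair_eq n hn]
      simp [bB15, h0]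
    · by_cases hij : i = j
      · have hci : c i = 0 := by rw [hij]; exact hcj
        have hmid : (i : ℕ) ≤ m - 1 := by rw [hij]; exact hjS
        have hsσ := hsum i
        simp only [sigma15, if_neg h0, if_pos hmid] at hsσ
        have hai : a i = n - 1 := by rw [hci] at hsσ; omega
        rw [hbi i, hai, hci]
        simp [bB15, h0, hij, hj0]
      · by_cases hmid : (i : ℕ) ≤ m - 1
        · have hci : c i = 1 := hcmid1 i hmid hij
          have hsσ := hsum i
          simp only [sigma15, if_neg h0, if_pos hmid] at hsσ
          have hai : a i = 0 := by rw [hci] at hsσ; omega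
          rw [hbi i, hai, hci]
          simp [bB15, h0, hij, hmid]
        · rw [(htail i (by omega)).1]
          simp [bB15, h0, hij, hmid]

theorem m_breakings (m n : ℕ) (hm : 1 ≤ m) (hn : 3 ≤ n) :
    {b : Fin (2 * m - 1) → Multiset ℕ | IsBreaking (sigma15 m n) (pi15 m n) b}.ncard = m ∧
      ∀ b : Fin (2 * m - 1) → Multiset ℕ,
        IsBreaking (sigma15 m n) (pi15 m n) b ↔
          (b = bA15 m n ∨
            ∃ j : Fin (2 * m - 1), 1 ≤ (j : ℕ) ∧ (j : ℕ) ≤ m - 1 ∧ b = bB15 m n j) := by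
  classical
  have hiff : ∀ b : Fin (2 * m - 1) → Multiset ℕ,
      IsBreaking (sigma15 m n) (pi15 m n) b ↔
        (b = bA15 m n ∨
          ∃ j : Fin (2 * m - 1), 1 ≤ (j : ℕ) ∧ (j : ℕ) ≤ m - 1 ∧ b = bB15 m n j) := by
    intro b
    constructor
    · exact breaking_classify m n hm hn b
    · rintro (rfl | ⟨j, hj1, hj2, rfl⟩)
      · exact bA_breaking m n hm hn
      · exact bB_breaking m n hm hn j hj1 hj2
  refine ⟨?_, hiff⟩
  set T : Finset (Fin (2 * m - 1)) :=
    Finset.univ.filter (fun j => 1 ≤ (j : ℕ) ∧ (j : ℕ) ≤ m - 1) with hT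
  set F : Finset (Fin (2 * m - 1) → Multiset ℕ) :=
    insert (bA15 m n) (T.image (bB15 m n)) with hF
  have hset : {b : Fin (2 * m - 1) → Multiset ℕ | IsBreaking (sigma15 m n) (pi15 m n) b}
      = ↑F := by
    ext b
    rw [Set.mem_setOf_eq, hiff b, Finset.mem_coe, hF, Finset.mem_insert]
    constructor
    · rintro (h | ⟨j, hj1, hj2, h⟩)
      · exact Or.inl h
      · exact Or.inr (Finset.mem_image.2 ⟨j, by
          rw [hT]; exact Finset.mem_filter.2 ⟨Finset.mem_univ _, hj1, hj2⟩, h.symm⟩)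
    · rintro (h | h)
      · exact Or.inl h
      · obtain ⟨j, hjT, hjeq⟩ := Finset.mem_image.1 h
        obtain ⟨hj1, hj2⟩ := (Finset.mem_filter.1 (hT ▸ hjT)).2
        exact Or.inr ⟨j, hj1, hj2, hjeq.symm⟩
  rw [hset, Set.ncard_coe_finset]
  have hne : ∀ j : Fin (2 * m - 1), 1 ≤ (j : ℕ) → (j : ℕ) ≤ m - 1 → bB15 m n j ≠ bA15 m n := by
    intro j hj1 hj2 heq
    have h0 : (0 : ℕ) < 2 * m - 1 := by omega
    have hev := congrFun heq ⟨0, h0⟩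
    simp only [bB15, bA15, if_true, eq_self_iff_true] at hev
    have hcnt := congrArg (Multiset.count (n - 1)) hev
    rw [Multiset.count_replicate, if_neg (by omega)] at hcnt
    simp [Multiset.insert_eq_cons, Multiset.count_cons, Multiset.count_singleton,
      show ¬((n:ℕ) - 1 = 1) by omega] at hcnt
  have hnotmem : bA15 m n ∉ T.image (bB15 m n) := by
    intro hmem
    obtain ⟨j, hjT, hjeq⟩ := Finset.mem_image.1 hmem
    obtain ⟨hj1, hj2⟩ := (Finset.mem_filter.1 (hT ▸ hjT)).2
    exact hne j hj1 hj2 hjeq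
  have hinj : Set.InjOn (bB15 m n) ↑T := by
    intro x hx y hy heq
    obtain ⟨hx1, hx2⟩ := (Finset.mem_filter.1 (hT ▸ Finset.mem_coe.1 hx)).2
    obtain ⟨hy1, hy2⟩ := (Finset.mem_filter.1 (hT ▸ Finset.mem_coe.1 hy)).2
    by_contra hxy
    have hev := congrFun heq x
    have e1 : bB15 m n x x = Multiset.replicate (n - 1) 1 := by
      simp [bB15, show ¬((x : ℕ) = 0) by omega]
    have e2 : bB15 m n y x = {n - 1} := by
      simp [bB15, show ¬((x : ℕ) = 0) by omega, hxy, hx2]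
    rw [e1, e2] at hev
    have hcard := congrArg Multiset.card hev
    simp [Multiset.card_replicate] at hcard
    omega
  rw [hF, Finset.card_insert_of_notMem hnotmem, Finset.card_image_of_injOn hinj, hT,
    filter_card m hm]
  omega
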